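/- The action of SL(2, ℤ) on the torus 𝕋² = ℝ²/ℤ² induced by matrix multiplication on ℝ² is k-transitive for every k ∈ ℕ: for all nonempty open sets U₁, …, U_k, V₁, …, V_k ⊆ 𝕋² there exists γ ∈ SL(2, ℤ) with γUᵢ ∩ Vᵢ ≠ ∅ for all 1 ≤ i ≤ k. -/

import Mathlib

open Pointwise

/-- A subset `N` of a group `G` is thick if for every finite subset `F ⊆ G`,
`N ∩ ⋂_{γ ∈ F} γN ≠ ∅`. -/
def IsThick {G : Type*} [Group G] (N : Set G) : Prop :=
  ∀ F : Finset G, (N ∩ ⋂ γ ∈ F, γ • N).Nonempty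

/-- The torus `𝕋² = ℝ²/ℤ²`, realized as the quotient of `Fin 2 → ℝ` by the integer
lattice (the subgroup of vectors with all coordinates in `ℤ·1`), with the quotient
topology. -/
abbrev Torus2 : Type :=
  (Fin 2 → ℝ) ⧸ (AddSubgroup.pi (Set.univ : Set (Fin 2)) fun _ => AddSubgroup.zmultiples (1 : ℝ))

/-- The quotient map `ℝ² → 𝕋²`. -/
def torusMk : (Fin 2 → ℝ) → Torus2 := QuotientAddGroup.mk

/-- The linear action of `γ ∈ SL(2, ℤ)` on `ℝ²` by matrix multiplication. -/
def sl2Vec (γ : Matrix.SpecialLinearGroup (Fin 2) ℤ) (v : Fin 2 → ℝ) : Fin 2 → ℝ :=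
  ((γ : Matrix (Fin 2) (Fin 2) ℤ).map (Int.cast : ℤ → ℝ)).mulVec v

/-- `slHits γ U V` says that `γU ∩ V ≠ ∅` for the induced action of `γ ∈ SL(2, ℤ)` on the
torus: since the quotient map is surjective, this holds iff some `v ∈ ℝ²` has `[v] ∈ U`
and `[γv] ∈ V`. -/
def slHits (γ : Matrix.SpecialLinearGroup (Fin 2) ℤ) (U V : Set Torus2) : Prop :=
  ∃ v : Fin 2 → ℝ, torusMk v ∈ U ∧ torusMk (sl2Vec γ v) ∈ V

/-! ### Auxiliary material: a hyperbolic element of `SL(2, ℤ)` and its dynamics -/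

noncomputable def slAlpha : ℝ := (Real.sqrt 5 - 1) / 2
noncomputable def slLam : ℝ := (3 + Real.sqrt 5) / 2
noncomputable def slW : Fin 2 → ℝ := ![1, slAlpha]
def slA : Matrix.SpecialLinearGroup (Fin 2) ℤ := ⟨!![2,1;1,1], by simp [Matrix.det_fin_two_of]⟩
noncomputable def slM : Matrix (Fin 2) (Fin 2) ℝ := (slA : Matrix (Fin 2) (Fin 2) ℤ).map Int.cast

lemma sqrt5_sq : Real.sqrt 5 * Real.sqrt 5 = 5 := Real.mul_self_sqrt (by norm_num)

lemma sqrt5_lt : 2 < Real.sqrt 5 := by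
  have := Real.sq_sqrt (by norm_num : (5:ℝ) ≥ 0)
  nlinarith [Real.sqrt_nonneg 5]

lemma slLam_gt : 1 < slLam := by unfold slLam; nlinarith [sqrt5_lt]

lemma irrational_slAlpha : Irrational slAlpha := by
  have h5 : Irrational (Real.sqrt 5) := by
    simpa using ((by norm_num : Nat.Prime 5)).irrational_sqrt
  have := (h5.sub_intCast 1).div_intCast (m := 2) (by norm_num)
  simpa [slAlpha] using this

lemma slM_eig : slM.mulVec slW = slLam • slW := by
  funext i
  fin_cases i <;>
    simp [slM, slA, slW, slLam, slAlpha, Matrix.mulVec, dotProduct,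
      Fin.sum_univ_two] <;> nlinarith [sqrt5_sq]

lemma slM_pow_eig (n : ℕ) : (slM ^ n).mulVec slW = slLam ^ n • slW := by
  induction n with
  | zero => simp [Matrix.mulVec_one]
  | succ n ih =>
    rw [pow_succ, ← Matrix.mulVec_mulVec, slM_eig, Matrix.mulVec_smul, ih, smul_smul, pow_succ]
    ring_nf

lemma sl2Vec_pow (n : ℕ) (v : Fin 2 → ℝ) : sl2Vec (slA ^ n) v = (slM ^ n).mulVec v := by
  unfold sl2Vec slM
  rw [Matrix.SpecialLinearGroup.coe_pow]
  have : ((slA : Matrix (Fin 2) (Fin 2) ℤ) ^ n).map (Int.cast : ℤ → ℝ)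
      = (Int.castRingHom ℝ).mapMatrix ((slA : Matrix (Fin 2) (Fin 2) ℤ) ^ n) := rfl
  rw [this, map_pow]
  rfl

/-! ### Basic facts about the torus -/

lemma torusMk_surj : Function.Surjective torusMk := fun x => Quotient.inductionOn x fun v => ⟨v, rfl⟩

lemma continuous_torusMk : Continuous torusMk := continuous_quot_mk

lemma torusMk_add (a b : Fin 2 → ℝ) : torusMk (a + b) = torusMk a + torusMk b := rfl

lemma torusMk_eq_of_mem {a b : Fin 2 → ℝ}
    (h : ∀ i, ∃ k : ℤ, b i - a i = k) : torusMk a = torusMk b := by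
  apply (QuotientAddGroup.eq (a := a) (b := b)).mpr
  intro i _
  obtain ⟨k, hk⟩ := h i
  exact ⟨k, by rw [neg_add_eq_sub]; simpa using hk.symm⟩

instance : CompactSpace Torus2 := by
  constructor
  have hsub : (Set.univ : Set Torus2) ⊆ torusMk '' (Set.univ.pi fun _ : Fin 2 => Set.Icc (0:ℝ) 1) := by
    rintro x -
    obtain ⟨v, rfl⟩ := torusMk_surj x
    refine ⟨fun i => Int.fract (v i), fun i _ => ⟨(Int.fract_nonneg _), (Int.fract_lt_one _).le⟩, ?_⟩
    exact torusMk_eq_of_mem fun i => ⟨⌊v i⌋, by rw [Int.fract]; ring⟩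
  have : IsCompact (torusMk '' (Set.univ.pi fun _ : Fin 2 => Set.Icc (0:ℝ) 1)) :=
    (isCompact_univ_pi fun _ : Fin 2 => (isCompact_Icc : IsCompact (Set.Icc (0:ℝ) 1))).image
      continuous_torusMk
  exact this.of_isClosed_subset isClosed_univ hsub

/-! ### Density of the unstable line -/

def slS : AddSubgroup ℝ where
  carrier := {x | ∃ m k : ℤ, x = m * slAlpha + k}
  zero_mem' := ⟨0, 0, by simp⟩
  add_mem' := by
    rintro a b ⟨m, k, rfl⟩ ⟨m', k', rfl⟩
    exact ⟨m + m', k + k', by push_cast; ring⟩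
  neg_mem' := by
    rintro a ⟨m, k, rfl⟩
    exact ⟨-m, -k, by push_cast; ring⟩

lemma dense_slS : Dense (slS : Set ℝ) := by
  rcases slS.dense_or_cyclic with h | ⟨a, ha⟩
  · exact h
  · exfalso
    have h1 : (1 : ℝ) ∈ slS := ⟨0, 1, by simp⟩
    have hα : slAlpha ∈ slS := ⟨1, 0, by simp⟩
    rw [ha, AddSubgroup.mem_closure_singleton] at h1 hα
    obtain ⟨n, hn⟩ := h1
    obtain ⟨m, hm⟩ := hα
    have hn0 : (n : ℝ) ≠ 0 := by
      intro h; rw [zsmul_eq_mul, h, zero_mul] at hn; norm_num at hn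
    have : slAlpha = ((m : ℚ) / (n : ℚ) : ℚ) := by
      have ha' : a = 1 / n := by field_simp; rw [← hn, zsmul_eq_mul]; ring
      rw [← hm, zsmul_eq_mul, ha']
      push_cast
      field_simp
    exact irrational_slAlpha ⟨_, this.symm⟩

lemma smul_slW (t : ℝ) : t • slW = ![t, t * slAlpha] := by
  funext i; fin_cases i <;> simp [slW]

lemma dense_line : DenseRange (fun t : ℝ => torusMk (t • slW)) := by
  rw [DenseRange, dense_iff_inter_open]
  rintro W hW ⟨x, hx⟩
  obtain ⟨v, rfl⟩ := torusMk_surj x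
  have hP : IsOpen (torusMk ⁻¹' W) := hW.preimage continuous_torusMk
  obtain ⟨ε, hε, hball⟩ := Metric.isOpen_iff.mp hP v hx
  obtain ⟨s, hsS, hsb⟩ := dense_slS.exists_mem_open Metric.isOpen_ball
    (⟨v 1 - slAlpha * v 0, Metric.mem_ball_self hε⟩ :
      (Metric.ball (v 1 - slAlpha * v 0) ε).Nonempty)
  obtain ⟨m, k, rfl⟩ := hsS
  set t : ℝ := v 0 + m with ht
  set p : Fin 2 → ℝ := ![v 0, slAlpha * v 0 + (m * slAlpha + k)] with hp
  have hsb' : |(↑m * slAlpha + ↑k) - (v 1 - slAlpha * v 0)| < ε := by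
    have := hsb
    rw [Metric.mem_ball, Real.dist_eq] at this
    exact this
  have hpball : p ∈ Metric.ball v ε := by
    rw [Metric.mem_ball, dist_pi_lt_iff hε]
    intro i
    fin_cases i
    · simpa [p, Real.dist_eq] using hε
    · show dist (p 1) (v 1) < ε
      rw [Real.dist_eq]
      have hrw : p 1 - v 1 = (↑m * slAlpha + ↑k) - (v 1 - slAlpha * v 0) := by
        simp [p]; ring
      rw [hrw]
      exact hsb'
  have hmk : torusMk (t • slW) = torusMk p := by
    apply torusMk_eq_of_mem
    intro i
    fin_cases i
    · refine ⟨-m, ?_⟩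
      show p 0 - (t • slW) 0 = (-m : ℤ)
      simp [p, t, slW]
    · refine ⟨k, ?_⟩
      show p 1 - (t • slW) 1 = (k : ℤ)
      simp [p, t, slW]
      ring
  exact ⟨torusMk p, hball hpball, ⟨t, hmk⟩⟩

/-- Uniform return-time bound: for any nonempty open `V ⊆ 𝕋²` there is `L` such that from
every starting point some time `t` with `|t| ≤ L` lands the line-translate in `V`. -/
lemma exists_bound (V : Set Torus2) (hV : IsOpen V) (hne : V.Nonempty) :
    ∃ L : ℝ, ∀ u : Fin 2 → ℝ, ∃ t : ℝ, |t| ≤ L ∧ torusMk (u + t • slW) ∈ V := by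
  obtain ⟨y₀, hy₀⟩ := hne
  have hchoice : ∀ x : Torus2, ∃ t : ℝ, x + torusMk (t • slW) ∈ V := by
    intro x
    have hopen : IsOpen ((fun z => x + z) ⁻¹' V) := hV.preimage (continuous_const.add continuous_id)
    have hne' : ((fun z => x + z) ⁻¹' V).Nonempty := ⟨-x + y₀, by simp [hy₀]⟩
    exact dense_line.exists_mem_open hopen hne'
  choose tt htt using hchoice
  have hcov : (Set.univ : Set Torus2) ⊆ ⋃ x : Torus2,
      ((fun y => y + torusMk (tt x • slW)) ⁻¹' V) := by
    intro x _
    exact Set.mem_iUnion.mpr ⟨x, htt x⟩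
  obtain ⟨F, hF⟩ := isCompact_univ.elim_finite_subcover _
    (fun x => hV.preimage (continuous_id.add continuous_const)) hcov
  have hFne : F.Nonempty := by
    by_contra h
    rw [Finset.not_nonempty_iff_eq_empty] at h
    have := hF (Set.mem_univ (torusMk 0))
    simp [h] at this
  refine ⟨F.sup' hFne fun x => |tt x|, fun u => ?_⟩
  obtain ⟨x, hxF, hx⟩ := Set.mem_iUnion₂.mp (hF (Set.mem_univ (torusMk u)))
  exact ⟨tt x, Finset.le_sup' (fun x => |tt x|) hxF, by rwa [torusMk_add]⟩

/-- Each nonempty open set contains a symmetric piece of unstable segment. -/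
lemma exists_segment (U : Set Torus2) (hU : IsOpen U) (hne : U.Nonempty) :
    ∃ u : Fin 2 → ℝ, ∃ δ : ℝ, 0 < δ ∧ ∀ s : ℝ, |s| ≤ δ → torusMk (u + s • slW) ∈ U := by
  obtain ⟨x, hx⟩ := hne
  obtain ⟨u, rfl⟩ := torusMk_surj x
  have hP : IsOpen (torusMk ⁻¹' U) := hU.preimage continuous_torusMk
  obtain ⟨ε, hε, hball⟩ := Metric.isOpen_iff.mp hP u hx
  refine ⟨u, ε / (2 * (‖slW‖ + 1)), by positivity, fun s hs => ?_⟩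
  apply hball
  rw [Metric.mem_ball, dist_eq_norm, add_sub_cancel_left, norm_smul, Real.norm_eq_abs]
  have h1 : ‖slW‖ < ‖slW‖ + 1 := by linarith
  have h2 : (0:ℝ) < ‖slW‖ + 1 := by positivity
  calc |s| * ‖slW‖ ≤ ε / (2 * (‖slW‖ + 1)) * (‖slW‖ + 1) := by
        apply mul_le_mul hs h1.le (norm_nonneg _) (by positivity)
    _ = ε / 2 := by field_simp
    _ < ε := by linarith

/-- The action of `SL(2, ℤ)` on the torus `𝕋² = ℝ²/ℤ²` is `k`-transitive for every `k`:
for all nonempty open `U₁, …, U_k, V₁, …, V_k ⊆ 𝕋²` there is `γ ∈ SL(2, ℤ)` with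
`γUᵢ ∩ Vᵢ ≠ ∅` for all `i`. -/
theorem sl2_torus_kTransitive :
    ∀ (k : ℕ) (U V : Fin k → Set Torus2),
      (∀ i, IsOpen (U i)) → (∀ i, (U i).Nonempty) →
      (∀ i, IsOpen (V i)) → (∀ i, (V i).Nonempty) →
      ∃ γ : Matrix.SpecialLinearGroup (Fin 2) ℤ, ∀ i, slHits γ (U i) (V i) := by
  intro k U V hUo hUne hVo hVne
  choose u δ hδ hseg using fun i => exists_segment (U i) (hUo i) (hUne i)
  choose L hL using fun i => exists_bound (V i) (hVo i) (hVne i)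
  have hlam : ∀ i : Fin k, ∃ n : ℕ, |L i| / δ i < slLam ^ n := fun i =>
    pow_unbounded_of_one_lt _ slLam_gt
  choose nn hnn using hlam
  set n : ℕ := Finset.univ.sup nn with hn
  have hpow : ∀ i, |L i| / δ i < slLam ^ n := by
    intro i
    refine lt_of_lt_of_le (hnn i) (pow_le_pow_right₀ (le_of_lt slLam_gt) ?_)
    exact Finset.le_sup (Finset.mem_univ i)
  have hlampos : (0:ℝ) < slLam ^ n := pow_pos (by linarith [slLam_gt]) n
  refine ⟨slA ^ n, fun i => ?_⟩
  obtain ⟨t, ht, htV⟩ := hL i (sl2Vec (slA ^ n) (u i))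
  set s : ℝ := t / slLam ^ n with hs
  have hsabs : |s| ≤ δ i := by
    have h1 : |L i| < slLam ^ n * δ i := (div_lt_iff₀ (hδ i)).mp (hpow i)
    rw [hs, abs_div, abs_of_pos hlampos, div_le_iff₀ hlampos]
    calc |t| ≤ |L i| := le_trans ht (le_abs_self _)
      _ ≤ δ i * slLam ^ n := by linarith
  refine ⟨u i + s • slW, hseg i s hsabs, ?_⟩
  have key : sl2Vec (slA ^ n) (u i + s • slW)
      = sl2Vec (slA ^ n) (u i) + t • slW := by
    rw [sl2Vec_pow, sl2Vec_pow, Matrix.mulVec_add, Matrix.mulVec_smul, slM_pow_eig,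
      smul_smul, hs, div_mul_cancel₀]
    exact ne_of_gt hlampos
  rw [key]
  exact htV
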